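/- arXiv:1408.4779 — 3 statements merged into one kernel-verified Lean document; each statement's English description precedes it below -/
import Mathlib

section
/- If g and g' are positive definite inner products on a real vector space V with induced norms |·| and |·|', and λ ≥ 1 satisfies (1/λ)|v|' ≤ |v| ≤ λ|v|' for all v ∈ V, then the bilinear form g − g' has operator norm at most λ² − λ⁻² with respect to g; that is, |(g−g')(v,w)| ≤ (λ² − λ⁻²)|v||w| for all v, w ∈ V. -/
/-!
STATEMENT 0: If `g`, `g'` are positive definite inner products on a real vector
space `V` with induced norms `|v| = √(g v v)`, `|v|' = √(g' v v)`, and `λ ≥ 1`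
satisfies `(1/λ)|v|' ≤ |v| ≤ λ|v|'` for all `v`, then
`|(g − g')(v,w)| ≤ (λ² − λ⁻²)|v||w|` for all `v, w`.
-/

noncomputable section

set_option maxHeartbeats 1000000 in
theorem bilinear_difference_bound {V : Type*} [AddCommGroup V] [Module ℝ V]
    (g g' : V →ₗ[ℝ] V →ₗ[ℝ] ℝ)
    (hg_symm : ∀ v w : V, g v w = g w v)
    (hg_pos : ∀ v : V, v ≠ 0 → 0 < g v v)
    (hg'_symm : ∀ v w : V, g' v w = g' w v)
    (hg'_pos : ∀ v : V, v ≠ 0 → 0 < g' v v)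
    (lam : ℝ) (hlam : 1 ≤ lam)
    (hcomp : ∀ v : V,
      lam⁻¹ * Real.sqrt (g' v v) ≤ Real.sqrt (g v v) ∧
      Real.sqrt (g v v) ≤ lam * Real.sqrt (g' v v)) :
    ∀ v w : V,
      |g v w - g' v w| ≤ (lam ^ 2 - lam⁻¹ ^ 2) *
        (Real.sqrt (g v v) * Real.sqrt (g w w)) := by
  have hlam0 : 0 < lam := lt_of_lt_of_le one_pos hlam
  have hinv : lam * lam⁻¹ = 1 := mul_inv_cancel₀ (ne_of_gt hlam0)
  have hinvle : lam⁻¹ ≤ 1 := by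
    rw [inv_le_one_iff₀]; right; exact hlam
  have hinv0 : 0 < lam⁻¹ := inv_pos.mpr hlam0
  have hMle : lam⁻¹ ^ 2 ≤ 1 := by nlinarith
  have hsum : 2 ≤ lam ^ 2 + lam⁻¹ ^ 2 := by nlinarith [sq_nonneg (lam - lam⁻¹)]
  have hgnn : ∀ u : V, 0 ≤ g u u := by
    intro u
    by_cases h : u = 0
    · simp [h]
    · exact (hg_pos u h).le
  have hg'nn : ∀ u : V, 0 ≤ g' u u := by
    intro u
    by_cases h : u = 0
    · simp [h]
    · exact (hg'_pos u h).le
  -- squared comparisons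
  have hM : ∀ u : V, lam⁻¹ ^ 2 * g u u ≤ g' u u := by
    intro u
    have h := (hcomp u).2
    have h2 : g u u ≤ lam ^ 2 * g' u u := by
      nlinarith [mul_self_le_mul_self (Real.sqrt_nonneg (g u u)) h,
        Real.sq_sqrt (hgnn u), Real.sq_sqrt (hg'nn u)]
    have h3 := mul_le_mul_of_nonneg_left h2 (sq_nonneg lam⁻¹)
    have h4 : lam⁻¹ ^ 2 * (lam ^ 2 * g' u u) = g' u u := by
      field_simp
    linarith
  have hL : ∀ u : V, g' u u ≤ lam ^ 2 * g u u := by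
    intro u
    have h := (hcomp u).1
    have h2 : Real.sqrt (g' u u) ≤ lam * Real.sqrt (g u u) := by
      have h3 := mul_le_mul_of_nonneg_left h hlam0.le
      rw [← mul_assoc, hinv, one_mul] at h3
      exact h3
    nlinarith [mul_self_le_mul_self (Real.sqrt_nonneg (g' u u)) h2,
      Real.sq_sqrt (hgnn u), Real.sq_sqrt (hg'nn u)]
  intro v w
  by_cases hv : v = 0
  · simp [hv]
  by_cases hw : w = 0
  · simp [hw]
  -- Cauchy-Schwarz for g
  have hCS : (g v w) ^ 2 ≤ g v v * g w w := by
    have h0 := hgnn (g w w • v - g v w • w)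
    simp only [map_sub, map_smul, LinearMap.sub_apply, LinearMap.smul_apply,
      smul_eq_mul] at h0
    rw [← hg_symm v w] at h0
    have hww := hg_pos w hw
    nlinarith [hww]
  set s := Real.sqrt (g v v) with hs_def
  set r := Real.sqrt (g w w) with hr_def
  have hs : s ^ 2 = g v v := Real.sq_sqrt (hgnn v)
  have hr : r ^ 2 = g w w := Real.sq_sqrt (hgnn w)
  have hs0 : 0 < s := Real.sqrt_pos.mpr (hg_pos v hv)
  have hr0 : 0 < r := Real.sqrt_pos.mpr (hg_pos w hw)
  have hrs : 0 < s * r := mul_pos hs0 hr0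
  set P : V := r • v + s • w with hP_def
  set Q : V := r • v - s • w with hQ_def
  have hgPval : g P P = 2 * (s * r) ^ 2 + 2 * (s * r) * g v w := by
    simp only [hP_def, map_add, map_smul, LinearMap.add_apply, LinearMap.smul_apply,
      smul_eq_mul]
    rw [hg_symm w v, ← hs, ← hr]; ring
  have hgQval : g Q Q = 2 * (s * r) ^ 2 - 2 * (s * r) * g v w := by
    simp only [hQ_def, map_sub, map_smul, LinearMap.sub_apply, LinearMap.smul_apply,
      smul_eq_mul]
    rw [hg_symm w v, ← hs, ← hr]; ring
  have hg'PQ : g' P P - g' Q Q = 4 * (s * r) * g' v w := by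
    simp only [hP_def, hQ_def, map_add, map_sub, map_smul, LinearMap.add_apply,
      LinearMap.sub_apply, LinearMap.smul_apply, smul_eq_mul]
    rw [hg'_symm w v]; ring
  have hMP := hM P
  have hLP := hL P
  have hMQ := hM Q
  have hLQ := hL Q
  rw [hgPval] at hMP hLP
  rw [hgQval] at hMQ hLQ
  -- bounds on s*r*(g v w) from Cauchy-Schwarz
  have ht1 : -((s * r) ^ 2) ≤ s * r * g v w := by
    nlinarith [sq_nonneg (g v w + s * r), hs, hr, hCS]
  have ht2 : s * r * g v w ≤ (s * r) ^ 2 := by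
    nlinarith [sq_nonneg (g v w - s * r), hs, hr, hCS]
  have hint1 := mul_nonneg (show (0:ℝ) ≤ lam ^ 2 + lam⁻¹ ^ 2 - 2 by linarith)
    (show (0:ℝ) ≤ s * r * g v w + (s * r) ^ 2 by linarith)
  have hint2 := mul_nonneg (show (0:ℝ) ≤ lam ^ 2 + lam⁻¹ ^ 2 - 2 by linarith)
    (show (0:ℝ) ≤ (s * r) ^ 2 - s * r * g v w by linarith)
  have hint3 := mul_nonneg (sq_nonneg (s * r)) (show (0:ℝ) ≤ 1 - lam⁻¹ ^ 2 by linarith)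
  have key1 : s * r * (g v w - g' v w) ≤ (lam ^ 2 - lam⁻¹ ^ 2) * (s * r) ^ 2 := by
    nlinarith [hMP, hLQ, hg'PQ, hint1, hint3]
  have key2 : s * r * (g' v w - g v w) ≤ (lam ^ 2 - lam⁻¹ ^ 2) * (s * r) ^ 2 := by
    nlinarith [hMQ, hLP, hg'PQ, hint2, hint3]
  have hring : (lam ^ 2 - lam⁻¹ ^ 2) * (s * r) ^ 2
      = (s * r) * ((lam ^ 2 - lam⁻¹ ^ 2) * (s * r)) := by ring
  have h1 : g v w - g' v w ≤ (lam ^ 2 - lam⁻¹ ^ 2) * (s * r) := by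
    refine le_of_mul_le_mul_left ?_ hrs
    linarith [key1, hring]
  have h2 : g' v w - g v w ≤ (lam ^ 2 - lam⁻¹ ^ 2) * (s * r) := by
    refine le_of_mul_le_mul_left ?_ hrs
    linarith [key2, hring]
  exact abs_le.mpr ⟨by linarith, h1⟩
end
end

section
/- Let φ : M → N be a C² map between Riemannian manifolds, r > 0 and μ ≥ 0. If the second tangent map φ_** : T(TM) → T(TN) satisfies |φ_**ξ| ≤ μ at every point ξ ∈ TM with |ξ| ≤ r (norms taken with respect to the Sasaki metrics), then |φ_*| ≤ μ everywhere on M, and the second fundamental tensor A_φ, defined by A_φ(ζ⊗ξ) = ∇'_ζ(φ_*X) − φ_*(∇_ζ X) for any local vector field X with X(x)=ξ, satisfies |A_φ| ≤ μ/r. -/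
/-!
STATEMENT 7: Let `φ : M → N` be C², `r > 0`, `μ ≥ 0`. If the second tangent
map satisfies `|φ_**ξ| ≤ μ` for all `ξ ∈ TM` with `|ξ| ≤ r` (Sasaki metrics),
then `|φ_*| ≤ μ` everywhere and `|A_φ| ≤ μ/r`.

With respect to the horizontal–vertical splittings
`T_ξTM ≅ T_xM ⊕ T_xM` and `T_{φ_*ξ}TN ≅ T_{φ(x)}N ⊕ T_{φ(x)}N` determined by
the Levi-Civita connections, the second tangent map is
`φ_**ξ(ζ₁,ζ₂) = (φ_*(ζ₁), φ_*(ζ₂) + A_φ(ζ₁⊗ξ))`, and the Sasaki norm on a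
direct sum is `‖(a,b)‖ = √(‖a‖² + ‖b‖²)`. Accordingly, the statement is
formalized pointwise over the family of tangent spaces: for each point `x` of
`M`, `E x` is the tangent space of `M` at `x` (an inner product space via the
metric of `M`), `F x` the tangent space of `N` at `φ(x)`, `L x = φ_{*x}`, and
`A x ζ ξ = A_φ(ζ⊗ξ)` at `x`; the hypothesis is the bound on `φ_**ξ` expressed
through the splitting formula, and the conclusions are the bounds on `φ_*`
and `A_φ`.
-/

set_option maxHeartbeats 1000000

noncomputable section

theorem dilation_and_second_fundamental_bound_of_second_tangent_bound
    {X : Type*} (E F : X → Type*)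
    [∀ x, NormedAddCommGroup (E x)] [∀ x, InnerProductSpace ℝ (E x)]
    [∀ x, NormedAddCommGroup (F x)] [∀ x, InnerProductSpace ℝ (F x)]
    (L : ∀ x, E x →ₗ[ℝ] F x)
    (A : ∀ x, E x →ₗ[ℝ] E x →ₗ[ℝ] F x)
    (r μ : ℝ) (hr : 0 < r) (hμ : 0 ≤ μ)
    (h : ∀ (x : X) (ξ : E x), ‖ξ‖ ≤ r → ∀ ζ₁ ζ₂ : E x,
      Real.sqrt (‖L x ζ₁‖ ^ 2 + ‖L x ζ₂ + A x ζ₁ ξ‖ ^ 2) ≤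
        μ * Real.sqrt (‖ζ₁‖ ^ 2 + ‖ζ₂‖ ^ 2)) :
    (∀ (x : X) (ζ : E x), ‖L x ζ‖ ≤ μ * ‖ζ‖) ∧
    (∀ (x : X) (ζ ξ : E x), ‖A x ζ ξ‖ ≤ (μ / r) * (‖ζ‖ * ‖ξ‖)) := by
  constructor
  · intro x ζ
    have h0 := h x 0 (by simpa using hr.le) ζ 0
    simp only [map_zero, add_zero, norm_zero] at h0
    have e0 : ((0:ℝ) ^ 2) = 0 := by norm_num
    rw [e0, add_zero, add_zero, Real.sqrt_sq (norm_nonneg (L x ζ)),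
      Real.sqrt_sq (norm_nonneg ζ)] at h0
    exact h0
  · intro x ζ ξ
    rcases eq_or_ne ξ 0 with hξ | hξ
    · subst hξ
      simp [mul_nonneg (div_nonneg hμ hr.le) (mul_nonneg (norm_nonneg _) (norm_nonneg _))]
    · have hξn : (0:ℝ) < ‖ξ‖ := norm_pos_iff.mpr hξ
      set ξ' : E x := (r / ‖ξ‖) • ξ with hξ'def
      have hξ'norm : ‖ξ'‖ = r := by
        rw [hξ'def, norm_smul, Real.norm_eq_abs, abs_of_pos (div_pos hr hξn)]
        field_simp
      have h0 := h x ξ' hξ'norm.le ζ 0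
      simp only [map_zero, zero_add, norm_zero] at h0
      have hA' : A x ζ ξ' = (r / ‖ξ‖) • A x ζ ξ := by
        rw [hξ'def, map_smul]
      have key : ‖A x ζ ξ'‖ ≤ μ * ‖ζ‖ := by
        calc ‖A x ζ ξ'‖ = Real.sqrt (‖A x ζ ξ'‖ ^ 2) :=
              (Real.sqrt_sq (norm_nonneg _)).symm
          _ ≤ Real.sqrt (‖L x ζ‖ ^ 2 + ‖A x ζ ξ'‖ ^ 2) :=
              Real.sqrt_le_sqrt (le_add_of_nonneg_left (sq_nonneg _))
          _ ≤ μ * Real.sqrt (‖ζ‖ ^ 2 + (0:ℝ) ^ 2) := by simpa using h0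
          _ = μ * ‖ζ‖ := by
              rw [show (0:ℝ) ^ 2 = 0 by ring, add_zero, Real.sqrt_sq (norm_nonneg _)]
      have hnorm : ‖A x ζ ξ'‖ = (r / ‖ξ‖) * ‖A x ζ ξ‖ := by
        rw [hA', norm_smul, Real.norm_eq_abs, abs_of_pos (div_pos hr hξn)]
      rw [hnorm] at key
      rw [div_mul_eq_mul_div, div_le_iff₀ hξn] at key
      rw [div_mul_eq_mul_div, le_div_iff₀ hr]
      nlinarith [key]
end
end

section
/- Let φ : M → N be a C² map between Riemannian manifolds, r > 0 and ν, K ≥ 0. If |φ_*| ≤ ν everywhere and |A_φ| ≤ K everywhere, then |φ_**ξ| ≤ √2(ν + Kr) for every ξ ∈ TM with |ξ| ≤ r, where φ_** is the tangent map of φ_* : TM → TN with respect to the Sasaki metrics. -/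
/-!
STATEMENT 8: Let `φ : M → N` be C², `r > 0`, `ν, K ≥ 0`. If `|φ_*| ≤ ν`
everywhere and `|A_φ| ≤ K` everywhere, then `|φ_**ξ| ≤ √2(ν + Kr)` for every
`ξ ∈ TM` with `|ξ| ≤ r` (Sasaki metrics).

As in STATEMENT 7, via the horizontal–vertical splittings the second tangent
map is `φ_**ξ(ζ₁,ζ₂) = (φ_*(ζ₁), φ_*(ζ₂) + A_φ(ζ₁⊗ξ))` and the Sasaki norm of
`(a,b)` is `√(‖a‖² + ‖b‖²)`; the statement is formalized pointwise over the
family of tangent spaces: `E x` is the tangent space of `M` at `x`, `F x` that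
of `N` at `φ(x)`, `L x = φ_{*x}`, `A x ζ ξ = A_φ(ζ⊗ξ)`.
-/

noncomputable section

theorem second_tangent_bound_of_dilation_and_second_fundamental_bound
    {X : Type*} (E F : X → Type*)
    [∀ x, NormedAddCommGroup (E x)] [∀ x, InnerProductSpace ℝ (E x)]
    [∀ x, NormedAddCommGroup (F x)] [∀ x, InnerProductSpace ℝ (F x)]
    (L : ∀ x, E x →ₗ[ℝ] F x)
    (A : ∀ x, E x →ₗ[ℝ] E x →ₗ[ℝ] F x)
    (r ν K : ℝ) (hr : 0 < r) (hν : 0 ≤ ν) (hK : 0 ≤ K)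
    (hL : ∀ (x : X) (ζ : E x), ‖L x ζ‖ ≤ ν * ‖ζ‖)
    (hA : ∀ (x : X) (ζ ξ : E x), ‖A x ζ ξ‖ ≤ K * (‖ζ‖ * ‖ξ‖)) :
    ∀ (x : X) (ξ : E x), ‖ξ‖ ≤ r → ∀ ζ₁ ζ₂ : E x,
      Real.sqrt (‖L x ζ₁‖ ^ 2 + ‖L x ζ₂ + A x ζ₁ ξ‖ ^ 2) ≤
        Real.sqrt 2 * (ν + K * r) * Real.sqrt (‖ζ₁‖ ^ 2 + ‖ζ₂‖ ^ 2) := by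
  intro x ξ hξ ζ₁ ζ₂
  set a := ‖ζ₁‖ with ha
  set b := ‖ζ₂‖ with hb
  have ha0 : 0 ≤ a := norm_nonneg _
  have hb0 : 0 ≤ b := norm_nonneg _
  have hp : ‖L x ζ₁‖ ≤ ν * a := hL x ζ₁
  have hq : ‖L x ζ₂ + A x ζ₁ ξ‖ ≤ ν * b + K * r * a := by
    calc ‖L x ζ₂ + A x ζ₁ ξ‖ ≤ ‖L x ζ₂‖ + ‖A x ζ₁ ξ‖ := norm_add_le _ _
    _ ≤ ν * b + K * (a * ‖ξ‖) := add_le_add (hL x ζ₂) (hA x ζ₁ ξ)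
    _ ≤ ν * b + K * r * a := by nlinarith [mul_le_mul_of_nonneg_left hξ (mul_nonneg hK ha0)]
  have hp0 : 0 ≤ ‖L x ζ₁‖ := norm_nonneg _
  have hq0 : 0 ≤ ‖L x ζ₂ + A x ζ₁ ξ‖ := norm_nonneg _
  have key : ‖L x ζ₁‖ ^ 2 + ‖L x ζ₂ + A x ζ₁ ξ‖ ^ 2 ≤
      2 * ((ν + K * r) ^ 2 * (a ^ 2 + b ^ 2)) := by
    nlinarith [sq_nonneg (ν * a - K * r * b), sq_nonneg (ν * b - K * r * a),
      mul_nonneg (mul_nonneg hν hK) hr.le, mul_nonneg ha0 hb0,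
      mul_nonneg hν ha0, mul_nonneg (mul_nonneg hK hr.le) ha0]
  calc Real.sqrt (‖L x ζ₁‖ ^ 2 + ‖L x ζ₂ + A x ζ₁ ξ‖ ^ 2)
      ≤ Real.sqrt (2 * ((ν + K * r) ^ 2 * (a ^ 2 + b ^ 2))) := Real.sqrt_le_sqrt key
    _ = Real.sqrt 2 * (ν + K * r) * Real.sqrt (a ^ 2 + b ^ 2) := by
        rw [Real.sqrt_mul (by norm_num), Real.sqrt_mul (sq_nonneg _),
          Real.sqrt_sq (by positivity)]
        ring
end
end
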